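/- Let $T$ be a stopping time (first hitting time) for a Markov chain on a finite state space, and suppose $M := \max_z E_z[T] < \infty$. Then for every starting state $y$, every integer $m \ge 1$: $E_y[T^m] \le m! \, E_y[T] \, M^{m-1}$. -/

import Mathlib

open MeasureTheory ProbabilityTheory
open scoped ENNReal

lemma aux_nat_pow_sub (k p : ℕ) : (k+1)^(p+1) - k^(p+1) ≤ (p+1) * (k+1)^p := by
  have h : (k+1)^(p+1) ≤ (p+1) * (k+1)^p + k^(p+1) := by
    induction p with
    | zero => simp
    | succ p ih =>
      calc (k+1)^(p+1+1) = (k+1) * (k+1)^(p+1) := by ring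
      _ ≤ (k+1) * ((p+1) * (k+1)^p + k^(p+1)) := Nat.mul_le_mul_left _ ih
      _ = (p+1) * (k+1)^(p+1) + k^(p+1) + k * k^(p+1) := by ring
      _ ≤ (p+1) * (k+1)^(p+1) + (k+1)^(p+1) + k * k^(p+1) := by
          have := Nat.pow_le_pow_left (Nat.le_succ k) (p+1)
          simp only [Nat.succ_eq_add_one] at this; omega
      _ = (p+1+1) * (k+1)^(p+1) + k^(p+1+1) := by ring
  omega

lemma aux_telescope (p : ℕ) (hp : 1 ≤ p) (n : ℕ) :
    ∑ k ∈ Finset.range n, ((k+1)^p - k^p) = n^p := by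
  induction n with
  | zero => simp [zero_pow (by omega : p ≠ 0)]
  | succ n ih =>
    rw [Finset.sum_range_succ, ih]
    have := Nat.pow_le_pow_left (Nat.le_succ n) p
    simp only [Nat.succ_eq_add_one] at this ⊢
    omega

lemma aux_tsum_partial (c N : ℕ → ℝ≥0∞) :
    ∑' k, (∑ j ∈ Finset.range (k+1), c j) * N k = ∑' n, ∑' j, c j * N (n + j) := by
  have h1 : ∀ k : ℕ, (∑ j ∈ Finset.range (k+1), c j) * N k
      = ∑' j : ℕ, if j ≤ k then c j * N k else 0 := by
    intro k
    rw [Finset.sum_mul, tsum_eq_sum (s := Finset.range (k+1))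
      (fun b hb => by rw [if_neg]; simpa [Nat.lt_succ_iff] using hb)]
    exact Finset.sum_congr rfl fun j hj => by
      rw [if_pos (Nat.lt_succ_iff.mp (Finset.mem_range.mp hj))]
  have h2 : ∀ j : ℕ, ∑' (k : ℕ), (if j ≤ k then c j * N k else 0)
      = ∑' (n : ℕ), c j * N (n + j) := by
    intro j
    have key := Summable.sum_add_tsum_nat_add' (f := fun k => if j ≤ k then c j * N k else 0) (k := j)
      ENNReal.summable
    have hz : ∑ i ∈ Finset.range j, (if j ≤ i then c j * N i else 0) = 0 :=
      Finset.sum_eq_zero fun i hi => by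
        rw [if_neg (by simpa using Finset.mem_range.mp hi |>.not_ge)]
    rw [hz, zero_add] at key
    rw [← key]
    exact tsum_congr fun n => by rw [if_pos (Nat.le_add_left j n)]
  calc ∑' k, (∑ j ∈ Finset.range (k+1), c j) * N k
      = ∑' (k : ℕ) (j : ℕ), if j ≤ k then c j * N k else 0 := tsum_congr h1
    _ = ∑' (j : ℕ) (k : ℕ), if j ≤ k then c j * N k else 0 := ENNReal.tsum_comm
    _ = ∑' (j : ℕ) (n : ℕ), c j * N (n + j) := tsum_congr h2
    _ = ∑' (n : ℕ) (j : ℕ), c j * N (n + j) := ENNReal.tsum_comm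

lemma aux_pow_eq (x : ℝ≥0∞) (hx : x = ⊤ ∨ ∃ n : ℕ, x = n) (p : ℕ) (hp : 1 ≤ p) :
    x ^ p = ∑' k : ℕ, if (k : ℝ≥0∞) < x then (((k+1)^p - k^p : ℕ) : ℝ≥0∞) else 0 := by
  rcases hx with rfl | ⟨n, rfl⟩
  · rw [ENNReal.top_pow (by omega)]
    refine le_antisymm ?_ le_top
    calc (⊤ : ℝ≥0∞) = ∑' _ : ℕ, (1 : ℝ≥0∞) :=
          (ENNReal.tsum_const_eq_top_of_ne_zero one_ne_zero).symm
      _ ≤ _ := by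
          refine ENNReal.tsum_le_tsum fun k => ?_
          rw [if_pos (ENNReal.natCast_lt_top k)]
          exact_mod_cast Nat.one_le_iff_ne_zero.mpr
            (Nat.sub_ne_zero_of_lt (Nat.pow_lt_pow_left (Nat.lt_succ_self k) (by omega)))
  · rw [tsum_eq_sum (s := Finset.range n) (fun b hb => by
      rw [if_neg]; simp only [Finset.mem_range] at hb
      exact fun h => hb (by exact_mod_cast h))]
    rw [Finset.sum_congr rfl (fun k hk => if_pos (by
      exact_mod_cast Finset.mem_range.mp hk))]
    rw [← Nat.cast_sum, aux_telescope p hp n, Nat.cast_pow]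

/-- Kac's moment formula: for the first hitting time `T` of a set by a Markov chain on a
finite state space, `E_y[T^m] ≤ m! E_y[T] M^(m-1)` where `M = max_z E_z[T]`. -/
theorem kac_moment_formula
    {S : Type*} [Fintype S] [MeasurableSpace S] [MeasurableSingletonClass S]
    (P : S → Measure (ℕ → S))
    (hprob : ∀ z, IsProbabilityMeasure (P z))
    (hstart : ∀ z, P z {ω | ω 0 = z} = 1)
    (hMarkov : ∀ z (n : ℕ) (A B : Set (ℕ → S)), MeasurableSet A → MeasurableSet B →
      (∀ ω ω' : ℕ → S, (∀ i ≤ n, ω i = ω' i) → (ω ∈ A ↔ ω' ∈ A)) →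
      P z (A ∩ {ω | (fun i => ω (i + n)) ∈ B}) = ∫⁻ ω in A, P (ω n) B ∂(P z))
    (A₀ : Set S)
    (T : (ℕ → S) → ℝ≥0∞)
    (hT : ∀ ω, T ω = ⨅ i : {i : ℕ // ω i ∈ A₀}, ((i : ℕ) : ℝ≥0∞))
    (M : ℝ≥0∞) (hM : M = ⨆ z, ∫⁻ ω, T ω ∂(P z)) (hMfin : M ≠ ⊤)
    (y : S) (m : ℕ) (hm : 1 ≤ m) :
    ∫⁻ ω, (T ω) ^ m ∂(P y) ≤ (Nat.factorial m : ℝ≥0∞) * (∫⁻ ω, T ω ∂(P y)) * M ^ (m - 1) := by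
  classical
  -- the event that the chain has not hit `A₀` up to time `n`
  set E : ℕ → Set (ℕ → S) := fun n => {ω | ∀ i ≤ n, ω i ∉ A₀} with hE
  have hEmeas : ∀ n, MeasurableSet (E n) := by
    intro n
    have : E n = ⋂ (i : ℕ), ⋂ (_ : i ≤ n), (fun ω : ℕ → S => ω i) ⁻¹' A₀ᶜ := by
      ext ω; simp [hE]
    rw [this]
    exact MeasurableSet.iInter fun i => MeasurableSet.iInter fun _ =>
      (measurable_pi_apply i) (Set.toFinite A₀ᶜ).measurableSet
  have hTval : ∀ (ω : ℕ → S) (k : ℕ), ((k : ℝ≥0∞) < T ω ↔ ω ∈ E k) := by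
    intro ω k
    rw [hT ω]
    constructor
    · intro h i hi hmem
      exact absurd (lt_of_lt_of_le h (iInf_le _ ⟨i, hmem⟩)) (by exact_mod_cast Nat.not_lt.mpr hi)
    · intro h
      have h1 : ((k : ℝ≥0∞) + 1) ≤ ⨅ i : {i : ℕ // ω i ∈ A₀}, ((i : ℕ) : ℝ≥0∞) := by
        refine le_iInf fun i => ?_
        have : k < (i : ℕ) := Nat.lt_of_not_le fun hle => h i hle i.2
        exact_mod_cast this
      exact lt_of_lt_of_le (ENNReal.lt_add_right (ENNReal.natCast_ne_top k) one_ne_zero) h1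
  have hTform : ∀ ω, T ω = ⊤ ∨ ∃ n : ℕ, T ω = n := by
    intro ω
    by_cases hne : ∃ i, ω i ∈ A₀
    · right
      obtain ⟨i₀, hi₀⟩ := hne
      refine ⟨sInf {i | ω i ∈ A₀}, ?_⟩
      have hmem : sInf {i | ω i ∈ A₀} ∈ {i | ω i ∈ A₀} := Nat.sInf_mem ⟨i₀, hi₀⟩
      rw [hT ω]
      refine le_antisymm (iInf_le (fun i : {i : ℕ // ω i ∈ A₀} => ((i : ℕ) : ℝ≥0∞)) ⟨_, hmem⟩) (le_iInf fun i => ?_)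
      exact_mod_cast Nat.sInf_le i.2
    · left
      rw [hT ω]
      have : IsEmpty {i : ℕ // ω i ∈ A₀} := ⟨fun i => hne ⟨i, i.2⟩⟩
      exact iInf_of_empty _
  -- layer-cake formula for moments
  have hpow : ∀ (z : S) (p : ℕ), 1 ≤ p → ∫⁻ ω, T ω ^ p ∂(P z)
      = ∑' k : ℕ, (((k+1)^p - k^p : ℕ) : ℝ≥0∞) * P z (E k) := by
    intro z p hp
    have h1 : ∀ ω, T ω ^ p
        = ∑' k : ℕ, (E k).indicator (fun _ => (((k+1)^p - k^p : ℕ) : ℝ≥0∞)) ω := by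
      intro ω
      rw [aux_pow_eq (T ω) (hTform ω) p hp]
      refine tsum_congr fun k => ?_
      rw [Set.indicator_apply]
      simp only [hTval ω k]
    rw [lintegral_congr h1, lintegral_tsum fun k =>
      (measurable_const.indicator (hEmeas k)).aemeasurable]
    refine tsum_congr fun k => ?_
    rw [lintegral_indicator (hEmeas k), setLIntegral_const]
  have hF : ∀ z : S, ∫⁻ ω, T ω ∂(P z) = ∑' k : ℕ, P z (E k) := by
    intro z
    have := hpow z 1 le_rfl
    simpa using this
  have hFM : ∀ z : S, ∫⁻ ω, T ω ∂(P z) ≤ M := fun z => hM ▸ le_iSup (fun z => ∫⁻ ω, T ω ∂(P z)) z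
  -- Markov property specialized to tail events
  have hMarkovE : ∀ (z : S) (n j : ℕ),
      P z (E (n + j)) = ∫⁻ ω in E n, P (ω n) (E j) ∂(P z) := by
    intro z n j
    have hset : E (n + j) = E n ∩ {ω | (fun i => ω (i + n)) ∈ E j} := by
      ext ω
      simp only [hE, Set.mem_setOf_eq, Set.mem_inter_iff]
      constructor
      · intro h
        exact ⟨fun i hi => h i (by omega), fun i hi => h (i + n) (by omega)⟩
      · rintro ⟨h1, h2⟩ i hi
        by_cases hin : i ≤ n
        · exact h1 i hin
        · have : i = (i - n) + n := by omega
          rw [this]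
          exact h2 (i - n) (by omega)
    rw [hset]
    refine hMarkov z n (E n) (E j) (hEmeas n) (hEmeas j) ?_
    intro ω ω' hωω'
    simp only [hE, Set.mem_setOf_eq]
    constructor
    · intro h i hi; rw [← hωω' i hi]; exact h i hi
    · intro h i hi; rw [hωω' i hi]; exact h i hi
  have hNmeas : ∀ (n j : ℕ), Measurable (fun ω : ℕ → S => P (ω n) (E j)) := fun n j =>
    Measurable.comp (f := fun ω : ℕ → S => ω n) (measurable_of_countable (fun s : S => P s (E j)))
      (measurable_pi_apply n)
  -- main induction
  have main : ∀ p : ℕ, 1 ≤ p → ∀ z : S,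
      ∫⁻ ω, T ω ^ p ∂(P z) ≤ (p.factorial : ℝ≥0∞) * (∫⁻ ω, T ω ∂(P z)) * M ^ (p - 1) := by
    intro p hp
    induction p, hp using Nat.le_induction with
    | base =>
      intro z
      simp [pow_one]
    | succ p hp ih =>
      intro z
      have hstep1 : ∫⁻ ω, T ω ^ (p+1) ∂(P z)
          ≤ ((p:ℝ≥0∞)+1) * ∑' k : ℕ, (((k+1)^p : ℕ) : ℝ≥0∞) * P z (E k) := by
        rw [hpow z (p+1) (by omega), ← ENNReal.tsum_mul_left]
        refine ENNReal.tsum_le_tsum fun k => ?_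
        rw [← mul_assoc]
        refine mul_le_mul_left ?_ _
        calc (((k+1)^(p+1) - k^(p+1) : ℕ) : ℝ≥0∞)
            ≤ (((p+1) * (k+1)^p : ℕ) : ℝ≥0∞) := by
              exact_mod_cast aux_nat_pow_sub k p
          _ = ((p:ℝ≥0∞)+1) * (((k+1)^p : ℕ) : ℝ≥0∞) := by push_cast; ring
      have hstep2 : ∑' k : ℕ, (((k+1)^p : ℕ) : ℝ≥0∞) * P z (E k)
          = ∑' n : ℕ, ∑' j : ℕ, (((j+1)^p - j^p : ℕ) : ℝ≥0∞) * P z (E (n + j)) := by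
        rw [← aux_tsum_partial (fun j => (((j+1)^p - j^p : ℕ) : ℝ≥0∞)) (fun k => P z (E k))]
        refine tsum_congr fun k => ?_
        congr 1
        rw [← Nat.cast_sum, aux_telescope p hp (k+1)]
      have hinner : ∀ n : ℕ, ∑' j : ℕ, (((j+1)^p - j^p : ℕ) : ℝ≥0∞) * P z (E (n + j))
          ≤ (p.factorial : ℝ≥0∞) * M ^ p * P z (E n) := by
        intro n
        have h1 : ∑' j : ℕ, (((j+1)^p - j^p : ℕ) : ℝ≥0∞) * P z (E (n + j))
            = ∫⁻ ω in E n, ∫⁻ ω', T ω' ^ p ∂(P (ω n)) ∂(P z) := by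
          calc ∑' j : ℕ, (((j+1)^p - j^p : ℕ) : ℝ≥0∞) * P z (E (n + j))
              = ∑' j : ℕ, ∫⁻ ω in E n, (((j+1)^p - j^p : ℕ) : ℝ≥0∞) * P (ω n) (E j) ∂(P z) := by
                refine tsum_congr fun j => ?_
                rw [hMarkovE z n j, lintegral_const_mul _ (hNmeas n j)]
            _ = ∫⁻ ω in E n, ∑' j : ℕ, (((j+1)^p - j^p : ℕ) : ℝ≥0∞) * P (ω n) (E j) ∂(P z) := by
                rw [lintegral_tsum fun j => ((hNmeas n j).const_mul _).aemeasurable]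
            _ = _ := by
                refine lintegral_congr fun ω => ?_
                rw [hpow (ω n) p hp]
        rw [h1]
        calc ∫⁻ ω in E n, ∫⁻ ω', T ω' ^ p ∂(P (ω n)) ∂(P z)
            ≤ ∫⁻ _ in E n, (p.factorial : ℝ≥0∞) * M ^ p ∂(P z) := by
              refine lintegral_mono fun ω => ?_
              calc ∫⁻ ω', T ω' ^ p ∂(P (ω n))
                  ≤ (p.factorial : ℝ≥0∞) * (∫⁻ ω', T ω' ∂(P (ω n))) * M ^ (p - 1) := ih (ω n)
                _ ≤ (p.factorial : ℝ≥0∞) * M * M ^ (p - 1) :=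
                    mul_le_mul_left (mul_le_mul_right (hFM (ω n)) _) _
                _ = (p.factorial : ℝ≥0∞) * M ^ p := by
                    rw [mul_assoc, ← pow_succ']
                    congr 2
                    omega
          _ = (p.factorial : ℝ≥0∞) * M ^ p * P z (E n) := setLIntegral_const _ _
      calc ∫⁻ ω, T ω ^ (p+1) ∂(P z)
          ≤ ((p:ℝ≥0∞)+1) * ∑' k : ℕ, (((k+1)^p : ℕ) : ℝ≥0∞) * P z (E k) := hstep1
        _ = ((p:ℝ≥0∞)+1) * ∑' n : ℕ, ∑' j : ℕ,
              (((j+1)^p - j^p : ℕ) : ℝ≥0∞) * P z (E (n + j)) := by rw [hstep2]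
        _ ≤ ((p:ℝ≥0∞)+1) * ∑' n : ℕ, (p.factorial : ℝ≥0∞) * M ^ p * P z (E n) :=
            mul_le_mul_right (ENNReal.tsum_le_tsum hinner) _
        _ = ((p:ℝ≥0∞)+1) * ((p.factorial : ℝ≥0∞) * M ^ p * ∑' n : ℕ, P z (E n)) := by
            rw [ENNReal.tsum_mul_left]
        _ = ((p+1).factorial : ℝ≥0∞) * (∫⁻ ω, T ω ∂(P z)) * M ^ (p + 1 - 1) := by
            rw [hF z, Nat.factorial_succ]
            push_cast
            ring
  exact main m hm y
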